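/- For any string u that is closed with a nonempty longest border, and for any string S containing u: if |u| > |lrs(S)|, then |bord(u)| > |lrs²(S)| provided u is a suffix of S. More precisely: if u is a closed suffix of S with |u| > |lrs(S)|, then |bord(u)| > |lrs(lrs(S))|. -/

import Mathlib

variable {α : Type*} [DecidableEq α]

/-- Number of occurrences of `s` as a factor of `w` (starting positions, 0-indexed). -/
def countOcc (s w : List α) : ℕ :=
  ((Finset.range (w.length + 1)).filter (fun i => s <+: w.drop i)).card

/-- `b` is a border of `w`. -/
def IsBorder (b w : List α) : Prop := b ≠ w ∧ b <+: w ∧ b <:+ w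

/-- The longest border of `w`. -/
def bord (w : List α) : List α :=
  w.take (((Finset.range w.length).filter (fun k => w.take k <:+ w)).sup id)

/-- A string is closed if its length is one, or it has a nonempty border occurring
exactly twice in it. -/
def IsClosedStr (w : List α) : Prop :=
  w.length = 1 ∨ ∃ b : List α, b ≠ [] ∧ IsBorder b w ∧ countOcc b w = 2

/-- The longest repeating suffix of `w` (the empty string if none). -/
def lrs (w : List α) : List α :=
  w.drop (w.length -
    ((Finset.range (w.length + 1)).filter
      (fun k => 2 ≤ countOcc (w.drop (w.length - k)) w)).sup id)

/-- `u` is a factor (contiguous substring) of `w`. -/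
def IsFactor (u w : List α) : Prop := ∃ s t : List α, w = s ++ u ++ t

/-- The set of all factors of `w`. -/
def factors (w : List α) : Finset (List α) :=
  (Finset.range (w.length + 1) ×ˢ Finset.range (w.length + 1)).image
    (fun p => (w.drop p.1).take p.2)

/-- The set of distinct closed factors of `w`. -/
noncomputable def closedFactors (w : List α) : Finset (List α) :=
  @Finset.filter _ IsClosedStr (Classical.decPred _) (factors w)

-- occurrence set membership
lemma mem_occSet {s w : List α} {i : ℕ} :
    i ∈ (Finset.range (w.length + 1)).filter (fun i => s <+: w.drop i) ↔
      i ≤ w.length ∧ s <+: w.drop i := by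
  simp [Nat.lt_succ_iff]

-- prefix monotone
lemma countOcc_le_of_prefix {s t w : List α} (h : s <+: t) :
    countOcc t w ≤ countOcc s w := by
  apply Finset.card_le_card
  intro i hi
  rw [mem_occSet] at *
  exact ⟨hi.1, h.trans hi.2⟩

-- suffix of pattern
lemma countOcc_le_of_suffix_pattern {b t w : List α} (hb : b <:+ t) (ht : t ≠ []) :
    countOcc t w ≤ countOcc b w := by
  classical
  apply Finset.card_le_card_of_injOn (fun i => i + (t.length - b.length))
  · intro i hi
    simp only [Finset.mem_coe] at *
    rw [mem_occSet] at *
    obtain ⟨hi1, hi2⟩ := hi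
    have hlen : t.length ≤ (w.drop i).length := hi2.length_le
    rw [List.length_drop] at hlen
    have hbt : b.length ≤ t.length := hb.length_le
    constructor
    · omega
    · obtain ⟨r, hr⟩ := hi2
      have hbe : b = t.drop (t.length - b.length) := by
        rw [List.suffix_iff_eq_drop] at hb; exact hb
      refine ⟨r, ?_⟩
      rw [← List.drop_drop, ← hr, List.drop_append_of_le_length (by omega), ← hbe]
  · intro a _ b _ h
    simpa using h

-- container suffix
lemma countOcc_le_of_suffix_container {s u w : List α} (h : u <:+ w) :
    countOcc s u ≤ countOcc s w := by
  classical
  obtain ⟨v, rfl⟩ := h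
  apply Finset.card_le_card_of_injOn (fun i => i + v.length)
  · intro i hi
    simp only [Finset.mem_coe] at *
    rw [mem_occSet] at *
    obtain ⟨hi1, hi2⟩ := hi
    refine ⟨by simp; omega, ?_⟩
    rwa [show i + v.length = v.length + i by omega, ← List.drop_drop,
      List.drop_left]
  · intro a _ b _ h
    simpa using h

lemma bord_prefix (w : List α) : bord w <+: w := List.take_prefix _ _

lemma bord_spec (w : List α) (hw : w ≠ []) :
    bord w <:+ w ∧ (bord w).length < w.length := by
  set F := (Finset.range w.length).filter (fun k => w.take k <:+ w) with hF
  have hne : F.Nonempty := by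
    refine ⟨0, ?_⟩
    rw [hF, Finset.mem_filter, Finset.mem_range]
    exact ⟨List.length_pos_iff.mpr hw, by simp⟩
  obtain ⟨k, hk, hsup⟩ := F.exists_mem_eq_sup hne id
  rw [hF, Finset.mem_filter, Finset.mem_range] at hk
  have : bord w = w.take k := by rw [bord, hsup]; rfl
  rw [this]
  exact ⟨hk.2, by rw [List.length_take]; omega⟩

lemma border_length_le_bord {b w : List α} (hb : IsBorder b w) :
    b.length ≤ (bord w).length := by
  obtain ⟨hne, hp, hs⟩ := hb
  have hlt : b.length < w.length := by
    rcases Nat.lt_or_ge b.length w.length with h | h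
    · exact h
    · exact absurd (hp.eq_of_length_le h) hne
  have hmem : b.length ∈ (Finset.range w.length).filter (fun k => w.take k <:+ w) := by
    rw [Finset.mem_filter, Finset.mem_range]
    refine ⟨hlt, ?_⟩
    rw [← List.prefix_iff_eq_take.mp hp]; exact hs
  have := Finset.le_sup (f := id) hmem
  rw [bord, List.length_take]
  simp only [id] at this
  omega

-- lrs lemmas
lemma lrs_suffix (w : List α) : lrs w <:+ w := List.drop_suffix _ _

lemma lrs_sup_le (w : List α) :
    ((Finset.range (w.length + 1)).filter
      (fun k => 2 ≤ countOcc (w.drop (w.length - k)) w)).sup id ≤ w.length := by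
  apply Finset.sup_le
  intro k hk
  rw [Finset.mem_filter, Finset.mem_range] at hk
  simpa [id] using Nat.lt_succ_iff.mp hk.1

lemma lrs_length (w : List α) :
    (lrs w).length = ((Finset.range (w.length + 1)).filter
      (fun k => 2 ≤ countOcc (w.drop (w.length - k)) w)).sup id := by
  have := lrs_sup_le w
  rw [lrs, List.length_drop]
  omega

lemma length_le_lrs {s w : List α} (hs : s <:+ w) (h2 : 2 ≤ countOcc s w) :
    s.length ≤ (lrs w).length := by
  have hsl : s.length ≤ w.length := hs.length_le
  have hmem : s.length ∈ (Finset.range (w.length + 1)).filter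
      (fun k => 2 ≤ countOcc (w.drop (w.length - k)) w) := by
    rw [Finset.mem_filter, Finset.mem_range]
    refine ⟨by omega, ?_⟩
    rw [← List.suffix_iff_eq_drop.mp hs]
    exact h2
  have := Finset.le_sup (f := id) hmem
  rw [lrs_length]
  simpa using this

lemma countOcc_lrs {w : List α} (h : lrs w ≠ []) : 2 ≤ countOcc (lrs w) w := by
  set F := (Finset.range (w.length + 1)).filter
      (fun k => 2 ≤ countOcc (w.drop (w.length - k)) w) with hF
  have hlen : (lrs w).length = F.sup id := lrs_length w
  have hpos : 0 < F.sup id := by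
    rw [← hlen]; exact List.length_pos_iff.mpr h
  have hne : F.Nonempty := by
    rcases Finset.eq_empty_or_nonempty F with h' | h'
    · rw [h'] at hpos; simp at hpos
    · exact h'
  obtain ⟨k, hk, hsup⟩ := F.exists_mem_eq_sup hne id
  rw [hF, Finset.mem_filter] at hk
  have : lrs w = w.drop (w.length - k) := by
    rw [lrs, ← hF, hsup]; rfl
  rw [this]
  exact hk.2

lemma countOcc_succ_le {b L u : List α} (hL : L <:+ u) (hlt : L.length < u.length)
    (hbp : b <+: u) : countOcc b L + 1 ≤ countOcc b u := by
  classical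
  obtain ⟨v, rfl⟩ := hL
  have hv : 0 < v.length := by
    rw [List.length_append] at hlt; omega
  set FL := (Finset.range (L.length + 1)).filter (fun i => b <+: L.drop i) with hFL
  set FU := (Finset.range ((v ++ L).length + 1)).filter (fun i => b <+: (v ++ L).drop i)
    with hFU
  have himg : FL.image (· + v.length) ⊆ FU := by
    intro j hj
    rw [Finset.mem_image] at hj
    obtain ⟨i, hi, rfl⟩ := hj
    rw [hFL, mem_occSet] at hi
    obtain ⟨hi1, hi2⟩ := hi
    rw [hFU, mem_occSet]
    constructor
    · rw [List.length_append]; omega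
    · rwa [show i + v.length = v.length + i by omega, ← List.drop_drop, List.drop_left]
  have h0 : 0 ∈ FU := by
    rw [hFU, mem_occSet]
    exact ⟨by omega, by simpa using hbp⟩
  have h0n : 0 ∉ FL.image (· + v.length) := by
    rw [Finset.mem_image]
    rintro ⟨i, _, h⟩
    omega
  have hsub : insert 0 (FL.image (· + v.length)) ⊆ FU := by
    rw [Finset.insert_subset_iff]; exact ⟨h0, himg⟩
  have hcard := Finset.card_le_card hsub
  rw [Finset.card_insert_of_notMem h0n,
    Finset.card_image_of_injective _ (fun a b h => by simpa using h)] at hcard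
  rw [countOcc, countOcc, ← hFL, ← hFU]
  omega

theorem stmt9 (S u : List α) (hc : IsClosedStr u) (hb : bord u ≠ [])
    (hu : u <:+ S) (hlrs : lrs S ≠ []) (hlen : (lrs S).length < u.length) :
    (lrs (lrs S)).length < (bord u).length := by
  set b := bord u with hbdef
  set L := lrs S with hLdef
  have hu_ne : u ≠ [] := by
    intro h; rw [h] at hlen; simp at hlen
  obtain ⟨hbs, hblt⟩ := bord_spec u hu_ne
  rw [← hbdef] at hbs hblt
  have hbpref : b <+: u := by rw [hbdef]; exact bord_prefix u
  have hbpos : 0 < b.length := List.length_pos_iff.mpr hb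
  -- closedness: countOcc b u ≤ 2
  have hcnt2 : countOcc b u ≤ 2 := by
    rcases hc with h1 | ⟨b', hb'ne, hb'bord, hb'cnt⟩
    · omega
    · have hle : b'.length ≤ b.length := by
        rw [hbdef]; exact border_length_le_bord hb'bord
      have hb'p : b' <+: b :=
        List.prefix_of_prefix_length_le hb'bord.2.1 hbpref hle
      calc countOcc b u ≤ countOcc b' u := countOcc_le_of_prefix hb'p
        _ = 2 := hb'cnt
  -- b occurs at least twice in u
  have hbocc : 2 ≤ countOcc b u := by
    have h0 : 0 ∈ (Finset.range (u.length + 1)).filter (fun i => b <+: u.drop i) := by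
      rw [mem_occSet]; exact ⟨by omega, by simpa using hbpref⟩
    have h1 : u.length - b.length ∈
        (Finset.range (u.length + 1)).filter (fun i => b <+: u.drop i) := by
      rw [mem_occSet]
      refine ⟨by omega, ?_⟩
      rw [← List.suffix_iff_eq_drop.mp hbs]
    have hsub : ({0, u.length - b.length} : Finset ℕ) ⊆
        (Finset.range (u.length + 1)).filter (fun i => b <+: u.drop i) := by
      intro x hx
      rw [Finset.mem_insert, Finset.mem_singleton] at hx
      rcases hx with rfl | rfl
      · exact h0
      · exact h1
    have := Finset.card_le_card hsub
    rw [Finset.card_insert_of_notMem (by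
      rw [Finset.mem_singleton]; omega), Finset.card_singleton] at this
    exact this
  -- b is a repeating suffix of S
  have hbS : b <:+ S := hbs.trans hu
  have hboccS : 2 ≤ countOcc b S :=
    le_trans hbocc (countOcc_le_of_suffix_container hu)
  have hbL : b.length ≤ L.length := length_le_lrs hbS hboccS
  -- by contradiction
  by_contra hcon
  push_neg at hcon
  have hLL_ne : lrs L ≠ [] := by
    intro h
    rw [h, List.length_nil] at hcon
    omega
  have hLLS : lrs L <:+ S := (lrs_suffix L).trans (lrs_suffix S)
  have hbLL : b <:+ lrs L := List.suffix_of_suffix_length_le hbS hLLS hcon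
  have hoccL : 2 ≤ countOcc b L :=
    le_trans (countOcc_lrs hLL_ne) (countOcc_le_of_suffix_pattern hbLL hLL_ne)
  have hLu : L <:+ u := List.suffix_of_suffix_length_le (lrs_suffix S) hu (le_of_lt hlen)
  have := countOcc_succ_le hLu hlen hbpref
  omega
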